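/- arXiv:2101.04520 — 2 statements merged into one kernel-verified Lean document; each statement's English description precedes it below -/
import Mathlib

section
/- Let p : Fin k → ℝ be nonnegative with k ≥ 1, and let q ≥ 0. Define H² = (1/2)·∑_{j=1}^k (√(p_j) − √(q/k))² and H_d² = (1/2)·(√(∑_{j=1}^k p_j) − √q)². Then H² ≥ H_d². -/
theorem hellinger_ge_dist_error (k : ℕ) (hk : 1 ≤ k) (p : Fin k → ℝ)
    (hp : ∀ j, 0 ≤ p j) (q : ℝ) (hq : 0 ≤ q) :
    (1 / 2) * ∑ j, (Real.sqrt (p j) - Real.sqrt (q / k)) ^ 2 ≥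
      (1 / 2) * (Real.sqrt (∑ j, p j) - Real.sqrt q) ^ 2 := by
  have hk0 : (0:ℝ) < k := by exact_mod_cast hk
  have hT : 0 ≤ ∑ j, p j := Finset.sum_nonneg fun j _ => hp j
  -- key: ∑ √p_j ≤ √k · √(∑ p)
  have hCS : (∑ j, Real.sqrt (p j)) ^ 2 ≤ k * ∑ j, p j := by
    have := sq_sum_le_card_mul_sum_sq (s := Finset.univ) (f := fun j => Real.sqrt (p j))
    simpa [Real.sq_sqrt (hp _)] using this
  have hS : ∑ j, Real.sqrt (p j) ≤ Real.sqrt k * Real.sqrt (∑ j, p j) := by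
    have h1 : ∑ j, Real.sqrt (p j) ≤ Real.sqrt (k * ∑ j, p j) := by
      rw [show Real.sqrt (k * ∑ j, p j) = Real.sqrt ((k:ℝ) * ∑ j, p j) from rfl]
      nlinarith [Real.sq_sqrt (mul_nonneg hk0.le hT), Real.sqrt_nonneg ((k:ℝ) * ∑ j, p j),
        Finset.sum_nonneg (fun j (_ : j ∈ Finset.univ) => Real.sqrt_nonneg (p j))]
    simpa [Real.sqrt_mul hk0.le] using h1
  have hqk : Real.sqrt (q / k) * Real.sqrt k = Real.sqrt q := by
    rw [← Real.sqrt_mul (by positivity)]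
    congr 1
    field_simp
  have key : Real.sqrt q * Real.sqrt (∑ j, p j) ≤ Real.sqrt (q / k) * ∑ j, Real.sqrt (p j) →
      True := fun _ => trivial
  have hmain : Real.sqrt (q / k) * ∑ j, Real.sqrt (p j)
      ≤ Real.sqrt q * Real.sqrt (∑ j, p j) := by
    calc Real.sqrt (q / k) * ∑ j, Real.sqrt (p j)
        ≤ Real.sqrt (q / k) * (Real.sqrt k * Real.sqrt (∑ j, p j)) := by
          exact mul_le_mul_of_nonneg_left hS (Real.sqrt_nonneg _)
      _ = Real.sqrt q * Real.sqrt (∑ j, p j) := by rw [← mul_assoc, hqk]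
  -- expand the sum
  have hexp : ∑ j, (Real.sqrt (p j) - Real.sqrt (q / k)) ^ 2
      = (∑ j, p j) - 2 * Real.sqrt (q / k) * ∑ j, Real.sqrt (p j) + q := by
    have : ∀ j : Fin k, (Real.sqrt (p j) - Real.sqrt (q / k)) ^ 2
        = p j - 2 * Real.sqrt (q / k) * Real.sqrt (p j) + q / k := by
      intro j
      have := Real.sq_sqrt (hp j)
      have h2 := Real.sq_sqrt (show (0:ℝ) ≤ q / k by positivity)
      rw [sub_sq, this, h2]; ring
    rw [Finset.sum_congr rfl fun j _ => this j]
    rw [Finset.sum_add_distrib, Finset.sum_sub_distrib, ← Finset.mul_sum]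
    simp [Finset.card_univ]
    field_simp
  have hexp2 : (Real.sqrt (∑ j, p j) - Real.sqrt q) ^ 2
      = (∑ j, p j) - 2 * (Real.sqrt q * Real.sqrt (∑ j, p j)) + q := by
    rw [sub_sq, Real.sq_sqrt hT, Real.sq_sqrt hq]; ring
  rw [hexp, hexp2]
  nlinarith [hmain]
end

section
/- Let X be a finite type partitioned into fibers by f : X → X' (f surjective, X' finite). For probability vectors p on X and p' on X', define H²(p,p') = (1/2)·∑_{x'∈X'} ∑_{x : f(x)=x'} (√p(x) − √(p'(x')/|f⁻¹(x')|))² and H_d²(p,p') = (1/2)·∑_{x'∈X'} (√(∑_{x : f(x)=x'} p(x)) − √p'(x'))². Then H²(p,p') ≥ H_d²(p,p'). -/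
lemma fiber_ineq {X : Type*} (F : Finset X) (hF : F.Nonempty) (p : X → ℝ) (q : ℝ)
    (hp : ∀ x, 0 ≤ p x) (hq : 0 ≤ q) :
    (Real.sqrt (∑ x ∈ F, p x) - Real.sqrt q) ^ 2 ≤
      ∑ x ∈ F, (Real.sqrt (p x) - Real.sqrt (q / F.card)) ^ 2 := by
  have hn : (0 : ℝ) < F.card := by exact_mod_cast Finset.card_pos.mpr hF
  have hS : (0 : ℝ) ≤ ∑ x ∈ F, p x := Finset.sum_nonneg fun x _ => hp x
  set S := ∑ x ∈ F, p x with hSdef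
  -- key: ∑ √p ≤ √n * √S
  have key : ∑ x ∈ F, Real.sqrt (p x) ≤ Real.sqrt F.card * Real.sqrt S := by
    have h1 : (∑ x ∈ F, Real.sqrt (p x)) ^ 2 ≤ F.card * S := by
      have := sq_sum_le_card_mul_sum_sq (s := F) (f := fun x => Real.sqrt (p x))
      simpa [Real.sq_sqrt (hp _)] using this
    have h2 : ∑ x ∈ F, Real.sqrt (p x) ≤ Real.sqrt (F.card * S) := by
      rw [← Real.sqrt_sq (Finset.sum_nonneg fun x _ => Real.sqrt_nonneg _)]
      exact Real.sqrt_le_sqrt h1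
    simpa [Real.sqrt_mul (le_of_lt hn)] using h2
  have expand : ∑ x ∈ F, (Real.sqrt (p x) - Real.sqrt (q / F.card)) ^ 2
      = S + q - 2 * Real.sqrt (q / F.card) * ∑ x ∈ F, Real.sqrt (p x) := by
    have hsq : ∀ x ∈ F, (Real.sqrt (p x) - Real.sqrt (q / F.card)) ^ 2
        = p x - 2 * Real.sqrt (q / F.card) * Real.sqrt (p x) + q / F.card := by
      intro x _
      have := Real.sq_sqrt (hp x)
      have h2 := Real.sq_sqrt (show (0:ℝ) ≤ q / F.card by positivity)
      rw [div_eq_mul_inv] at h2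
      ring_nf
      linarith [this, h2]
    rw [Finset.sum_congr rfl hsq, Finset.sum_add_distrib, Finset.sum_sub_distrib,
      Finset.sum_const, Finset.mul_sum]
    field_simp
    rw [nsmul_eq_mul, mul_div_assoc', mul_div_cancel_left₀ q hn.ne', hSdef]
    ring
  have expandL : (Real.sqrt S - Real.sqrt q) ^ 2
      = S + q - 2 * Real.sqrt q * Real.sqrt S := by
    have := Real.sq_sqrt hS
    have h2 := Real.sq_sqrt hq
    nlinarith
  rw [expand, expandL]
  have cross : Real.sqrt (q / F.card) * ∑ x ∈ F, Real.sqrt (p x)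
      ≤ Real.sqrt q * Real.sqrt S := by
    rw [Real.sqrt_div hq]
    have hsn : (0:ℝ) < Real.sqrt F.card := Real.sqrt_pos.mpr hn
    calc Real.sqrt q / Real.sqrt F.card * ∑ x ∈ F, Real.sqrt (p x)
        ≤ Real.sqrt q / Real.sqrt F.card * (Real.sqrt F.card * Real.sqrt S) := by
          apply mul_le_mul_of_nonneg_left key (by positivity)
      _ = Real.sqrt q * Real.sqrt S := by
          field_simp
  linarith

theorem hellinger_regret_decomposition (X X' : Type*) [Fintype X] [Fintype X'] [DecidableEq X']
    (f : X → X') (hf : Function.Surjective f) (p : X → ℝ) (p' : X' → ℝ)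
    (hp : ∀ x, 0 ≤ p x) (hp' : ∀ x', 0 ≤ p' x')
    (hp1 : ∑ x, p x = 1) (hp'1 : ∑ x', p' x' = 1) :
    (1 / 2) * ∑ x', ∑ x ∈ Finset.univ.filter (fun x => f x = x'),
        (Real.sqrt (p x) -
          Real.sqrt (p' x' / (Finset.univ.filter fun x => f x = x').card)) ^ 2 ≥
    (1 / 2) * ∑ x', (Real.sqrt (∑ x ∈ Finset.univ.filter (fun x => f x = x'), p x) -
        Real.sqrt (p' x')) ^ 2 := by
  apply mul_le_mul_of_nonneg_left _ (by norm_num : (0:ℝ) ≤ 1/2)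
  apply Finset.sum_le_sum
  intro x' _
  apply fiber_ineq _ _ p (p' x') hp (hp' x')
  obtain ⟨x, hx⟩ := hf x'
  exact ⟨x, by simp [hx]⟩
end
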